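/- For n = 2 players, if one player (Bob) uses protocol f, then for every acknowledgment-based protocol g for the other player (Alice), Alice's unconditional expected latency under the profile (g, f) is at least 3. -/

import Mathlib

set_option linter.unreachableTactic false
set_option linter.unusedTactic false


open scoped ENNReal

namespace Contention

/-- An acknowledgment-based protocol: maps a player's personal transmission history
(the list of her own past transmission indicators, oldest slot first) to the
probability of transmitting in the next slot. -/
abbrev Protocol : Type := List Bool → ℝ

/-- A protocol is valid if it always prescribes a probability in `[0,1]`. -/
def ValidProtocol (f : Protocol) : Prop := ∀ h : List Bool, 0 ≤ f h ∧ f h ≤ 1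

/-- A joint transmission history: the list of transmission vectors, oldest slot first. -/
abbrev Hist (n : ℕ) : Type := List (Fin n → Bool)

/-- The personal transmission history of player `i` extracted from a joint history. -/
def personal {n : ℕ} (h : Hist n) (i : Fin n) : List Bool := h.map fun v => v i

/-- Player `i` transmits alone (hence successfully) in the slot with transmission vector `v`. -/
def alone {n : ℕ} (v : Fin n → Bool) (i : Fin n) : Prop :=
  v i = true ∧ ∀ j : Fin n, j ≠ i → v j = false

instance {n : ℕ} (v : Fin n → Bool) (i : Fin n) : Decidable (alone v i) := by
  unfold alone; infer_instance

/-- Player `i` is still pending after joint history `h` (she never transmitted alone). -/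
def pending {n : ℕ} (h : Hist n) (i : Fin n) : Prop := ∀ v ∈ h, ¬ alone v i

instance {n : ℕ} (h : Hist n) (i : Fin n) : Decidable (pending h i) := by
  unfold pending; infer_instance

/-- Probability that the next slot has transmission vector `v`, given joint history `h`:
each pending player transmits independently with the probability her protocol assigns to
her personal history, and players that already succeeded stay quiet. -/
noncomputable def stepProb {n : ℕ} (F : Fin n → Protocol) (h : Hist n) (v : Fin n → Bool) : ℝ :=
  ∏ i : Fin n,
    if pending h i then
      (if v i = true then F i (personal h i) else 1 - F i (personal h i))
    else
      (if v i = true then 0 else 1)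

/-- Probability that, starting after joint history `h`, the next `e.length` slots produce
exactly the extension `e`. -/
noncomputable def contProb {n : ℕ} (F : Fin n → Protocol) (h e : Hist n) : ℝ :=
  ∏ t ∈ Finset.range e.length, stepProb F (h ++ e.take t) (e.getD t fun _ => false)

/-- Probability that the first `h.length` slots produce exactly the joint history `h`. -/
noncomputable def histProb {n : ℕ} (F : Fin n → Protocol) (h : Hist n) : ℝ := contProb F [] h

/-- Conditional probability, given joint history `h`, that player `i` is still pending
after `s` further slots. -/
noncomputable def condPendProb {n : ℕ} (F : Fin n → Protocol) (h : Hist n) (i : Fin n)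
    (s : ℕ) : ℝ :=
  ∑ e : Fin s → Fin n → Bool,
    if pending (h ++ List.ofFn e) i then contProb F h (List.ofFn e) else 0

/-- Conditional expected latency `E[Tᵢ | h]` of player `i` given joint history `h`
(`Tᵢ` is the first slot in which `i` transmits alone), computed via
`E[Tᵢ | h] = ∑_{s ≥ 0} Pr(Tᵢ > s | h)`; for `s ≤ h.length` the event `Tᵢ > s` is
determined by `h`, and for larger `s` its probability is `condPendProb`. -/
noncomputable def condLatency {n : ℕ} (F : Fin n → Protocol) (h : Hist n) (i : Fin n) : ℝ≥0∞ :=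
  ∑' s : ℕ,
    if s ≤ h.length then (if pending (h.take s) i then 1 else 0)
    else ENNReal.ofReal (condPendProb F h i (s - h.length))

/-- Conditional expected number of further slots until player `i` succeeds, given joint
history `h` (the slot of the successful transmission itself is counted). -/
noncomputable def condRemaining {n : ℕ} (F : Fin n → Protocol) (h : Hist n) (i : Fin n) : ℝ≥0∞ :=
  ∑' s : ℕ, ENNReal.ofReal (condPendProb F h i s)

/-- A profile of protocols is in equilibrium if after no joint history (arising with
positive probability) can a player strictly decrease her conditional expected latency
by unilaterally switching to another (valid) protocol. -/
def IsEquilibrium {n : ℕ} (F : Fin n → Protocol) : Prop :=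
  ∀ i : Fin n, ∀ h : Hist n, 0 < histProb F h →
    ∀ g : Protocol, ValidProtocol g →
      condLatency F h i ≤ condLatency (Function.update F i g) h i

end Contention

namespace Contention

/-- The two-player protocol `f`: transmit with probability `2/3` in the first slot and in
any slot immediately following one's own transmission (`X_{i,t-1} = 1`), and with
probability `1` in any slot immediately following one's own quiet slot (`X_{i,t-1} = 0`). -/
noncomputable def fTwo : Protocol := fun h =>
  match h.getLast? with
  | none => 2/3
  | some true => 2/3
  | some false => 1

end Contention

namespace Contention

/-! ### Auxiliary development -/

lemma validProtocol_fTwo : ValidProtocol fTwo := by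
  intro h
  unfold fTwo
  rcases h.getLast? with _ | b
  · norm_num
  · cases b <;> norm_num

lemma fTwo_of_ne {h : List Bool} (hne : h.getLast? ≠ some false) : fTwo h = 2/3 := by
  unfold fTwo
  rcases e : h.getLast? with _ | b
  · rfl
  · cases b
    · exact absurd e hne
    · rfl

lemma fTwo_of_false {h : List Bool} (he : h.getLast? = some false) : fTwo h = 1 := by
  unfold fTwo; rw [he]

noncomputable def FS (g : Protocol) : Fin 2 → Protocol := fun i => if i = 0 then g else fTwo

lemma validProtocol_FS {g : Protocol} (hg : ValidProtocol g) (i : Fin 2) :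
    ValidProtocol (FS g i) := by
  unfold FS; split
  · exact hg
  · exact validProtocol_fTwo

def vpair (x y : Bool) : Fin 2 → Bool := fun i => if i = 0 then x else y

@[simp] lemma vpair_zero (x y : Bool) : vpair x y 0 = x := rfl
@[simp] lemma vpair_one (x y : Bool) : vpair x y 1 = y := by
  unfold vpair; rw [if_neg (by decide)]

def jh {s : ℕ} (a b : Fin s → Bool) : Hist 2 := List.ofFn fun t => vpair (a t) (b t)

lemma jh_snoc {s : ℕ} (a b : Fin s → Bool) (x y : Bool) :
    jh (Fin.snoc a x) (Fin.snoc b y) = jh a b ++ [vpair x y] := by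
  unfold jh
  rw [List.ofFn_succ']
  simp [Fin.snoc_castSucc, Fin.snoc_last, List.concat_eq_append]

lemma personal_append {n : ℕ} (h : Hist n) (v : Fin n → Bool) (i : Fin n) :
    personal (h ++ [v]) i = personal h i ++ [v i] := by
  simp [personal]

lemma personal_jh_zero {s : ℕ} (a b : Fin s → Bool) : personal (jh a b) 0 = List.ofFn a := by
  simp only [personal, jh, List.map_ofFn]
  congr 1

lemma personal_jh_one {s : ℕ} (a b : Fin s → Bool) : personal (jh a b) 1 = List.ofFn b := by
  simp only [personal, jh, List.map_ofFn]
  congr 1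

lemma pending_append {n : ℕ} (h : Hist n) (v : Fin n → Bool) (i : Fin n) :
    pending (h ++ [v]) i ↔ pending h i ∧ ¬ alone v i := by
  unfold pending
  simp [List.mem_append, or_imp, forall_and]

lemma alone_zero (v : Fin 2 → Bool) : alone v 0 ↔ (v 0 = true ∧ v 1 = false) := by
  unfold alone
  constructor
  · rintro ⟨h1, h2⟩; exact ⟨h1, h2 1 (by decide)⟩
  · rintro ⟨h1, h2⟩
    refine ⟨h1, fun j hj => ?_⟩
    fin_cases j
    · exact absurd rfl hj
    · exact h2

lemma alone_one (v : Fin 2 → Bool) : alone v 1 ↔ (v 1 = true ∧ v 0 = false) := by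
  unfold alone
  constructor
  · rintro ⟨h1, h2⟩; exact ⟨h1, h2 0 (by decide)⟩
  · rintro ⟨h1, h2⟩
    refine ⟨h1, fun j hj => ?_⟩
    fin_cases j
    · exact h2
    · exact absurd rfl hj

lemma stepProb_two (g : Protocol) (h : Hist 2) (v : Fin 2 → Bool) :
    stepProb (FS g) h v =
      (if pending h 0 then
        (if v 0 = true then g (personal h 0) else 1 - g (personal h 0))
       else (if v 0 = true then 0 else 1)) *
      (if pending h 1 then
        (if v 1 = true then fTwo (personal h 1) else 1 - fTwo (personal h 1))
       else (if v 1 = true then 0 else 1)) := by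
  unfold stepProb
  rw [Fin.prod_univ_two]
  have h0 : FS g 0 = g := rfl
  have h1 : FS g 1 = fTwo := by unfold FS; rw [if_neg (by decide)]
  rw [h0, h1]

lemma stepProb_nonneg {g : Protocol} (hg : ValidProtocol g) (h : Hist 2) (v : Fin 2 → Bool) :
    0 ≤ stepProb (FS g) h v := by
  unfold stepProb
  apply Finset.prod_nonneg
  intro i _
  have hv := validProtocol_FS hg i (personal h i)
  split_ifs <;> [exact hv.1; linarith [hv.2]; norm_num; norm_num]

lemma contProb_nonneg {g : Protocol} (hg : ValidProtocol g) (h e : Hist 2) :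
    0 ≤ contProb (FS g) h e := by
  unfold contProb
  exact Finset.prod_nonneg fun t _ => stepProb_nonneg hg _ _

lemma histProb_nonneg {g : Protocol} (hg : ValidProtocol g) (h : Hist 2) :
    0 ≤ histProb (FS g) h := contProb_nonneg hg _ _

lemma condPendProb_nonneg {g : Protocol} (hg : ValidProtocol g) (h : Hist 2) (i : Fin 2) (s : ℕ) :
    0 ≤ condPendProb (FS g) h i s := by
  unfold condPendProb
  apply Finset.sum_nonneg
  intro e _
  split
  · exact contProb_nonneg hg _ _
  · exact le_refl 0

lemma histProb_append (g : Protocol) (h : Hist 2) (v : Fin 2 → Bool) :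
    histProb (FS g) (h ++ [v]) = histProb (FS g) h * stepProb (FS g) h v := by
  unfold histProb contProb
  simp only [List.nil_append, List.length_append, List.length_singleton]
  rw [Finset.prod_range_succ]
  congr 1
  · apply Finset.prod_congr rfl
    intro t ht
    rw [Finset.mem_range] at ht
    rw [List.take_append_of_le_length (le_of_lt ht), List.getD_append _ _ _ _ ht]
  · rw [List.take_append_of_le_length (le_refl _), List.take_length,
      List.getD_append_right _ _ _ _ (le_refl _)]
    simp

/-! ### Classes and weights -/

def isG (h : Hist 2) : Prop := pending h 0 ∧ ¬ pending h 1
def isT (h : Hist 2) : Prop := pending h 0 ∧ pending h 1 ∧ (personal h 1).getLast? ≠ some false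
def isF (h : Hist 2) : Prop := pending h 0 ∧ pending h 1 ∧ (personal h 1).getLast? = some false

instance (h : Hist 2) : Decidable (isG h) := by unfold isG; infer_instance
instance (h : Hist 2) : Decidable (isT h) := by unfold isT; infer_instance
instance (h : Hist 2) : Decidable (isF h) := by unfold isF; infer_instance

noncomputable def wG (g : Protocol) (s : ℕ) (a : Fin s → Bool) : ℝ :=
  ∑ b : Fin s → Bool, if isG (jh a b) then histProb (FS g) (jh a b) else 0
noncomputable def wT (g : Protocol) (s : ℕ) (a : Fin s → Bool) : ℝ :=
  ∑ b : Fin s → Bool, if isT (jh a b) then histProb (FS g) (jh a b) else 0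
noncomputable def wF (g : Protocol) (s : ℕ) (a : Fin s → Bool) : ℝ :=
  ∑ b : Fin s → Bool, if isF (jh a b) then histProb (FS g) (jh a b) else 0

lemma wG_nonneg {g : Protocol} (hg : ValidProtocol g) (s : ℕ) (a : Fin s → Bool) :
    0 ≤ wG g s a :=
  Finset.sum_nonneg fun b _ => by
    split
    · exact histProb_nonneg hg _
    · exact le_refl 0
lemma wT_nonneg {g : Protocol} (hg : ValidProtocol g) (s : ℕ) (a : Fin s → Bool) :
    0 ≤ wT g s a :=
  Finset.sum_nonneg fun b _ => by
    split
    · exact histProb_nonneg hg _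
    · exact le_refl 0
lemma wF_nonneg {g : Protocol} (hg : ValidProtocol g) (s : ℕ) (a : Fin s → Bool) :
    0 ≤ wF g s a :=
  Finset.sum_nonneg fun b _ => by
    split
    · exact histProb_nonneg hg _
    · exact le_refl 0

/-- splitting the alone-pending indicator into the three Bob classes. -/
lemma indicator_split (h : Hist 2) (z : ℝ) :
    (if pending h 0 then z else 0) =
      (if isG h then z else 0) + (if isT h then z else 0) + (if isF h then z else 0) := by
  unfold isG isT isF
  by_cases h0 : pending h 0 <;> by_cases h1 : pending h 1 <;>
    by_cases h2 : (personal h 1).getLast? = some false <;> simp [h0, h1, h2]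

/-- Sum over functions on `Fin (s+1)` as a sum over `snoc` decompositions. -/
def snocEquiv (s : ℕ) : ((Fin s → Bool) × Bool) ≃ (Fin (s + 1) → Bool) where
  toFun := fun p => Fin.snoc p.1 p.2
  invFun := fun a => (fun i => a i.castSucc, a (Fin.last s))
  left_inv := by
    rintro ⟨a, x⟩
    simp [Fin.snoc_castSucc, Fin.snoc_last]
  right_inv := by
    intro a
    funext i
    refine Fin.lastCases ?_ ?_ i
    · simp [Fin.snoc_last]
    · intro j; simp [Fin.snoc_castSucc]

lemma sum_snoc {s : ℕ} (f : (Fin (s + 1) → Bool) → ℝ) :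
    ∑ a : Fin (s + 1) → Bool, f a =
      ∑ a : Fin s → Bool, (f (Fin.snoc a true) + f (Fin.snoc a false)) := by
  rw [← (snocEquiv s).sum_comp f, Fintype.sum_prod_type]
  apply Finset.sum_congr rfl
  intro a _
  rw [Fintype.sum_bool]
  rfl

def colEquiv (s : ℕ) : ((Fin s → Bool) × (Fin s → Bool)) ≃ (Fin s → Fin 2 → Bool) where
  toFun := fun p => fun t => vpair (p.1 t) (p.2 t)
  invFun := fun e => (fun t => e t 0, fun t => e t 1)
  left_inv := by rintro ⟨a, b⟩; simp
  right_inv := by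
    intro e
    funext t i
    fin_cases i <;> simp [vpair]

/-- The pending probability as a sum of classified weights. -/
lemma condPend_eq (g : Protocol) (s : ℕ) :
    condPendProb (FS g) [] 0 s = ∑ a : Fin s → Bool, (wG g s a + wT g s a + wF g s a) := by
  unfold condPendProb
  rw [← (colEquiv s).sum_comp, Fintype.sum_prod_type]
  apply Finset.sum_congr rfl
  intro a _
  unfold wG wT wF
  rw [← Finset.sum_add_distrib, ← Finset.sum_add_distrib]
  apply Finset.sum_congr rfl
  intro b _
  have hj : List.ofFn (colEquiv s (a, b)) = jh a b := rfl
  have hj2 : ([] : Hist 2) ++ List.ofFn (colEquiv s (a, b)) = jh a b := by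
    rw [List.nil_append, hj]
  rw [hj2, hj]
  exact indicator_split (jh a b) _

/-- base case weights -/
lemma wT_zero (g : Protocol) (a : Fin 0 → Bool) : wT g 0 a = 1 := by
  unfold wT
  rw [Fintype.sum_eq_single (fun (_ : Fin 0) => false) (by intro b; intro hb; exact absurd (Subsingleton.elim _ _) hb)]
  have hj : jh a (fun (_ : Fin 0) => false) = [] := by unfold jh; simp
  rw [hj]
  have : isT ([] : Hist 2) := by
    refine ⟨?_, ?_, ?_⟩ <;> simp [pending, personal]
  rw [if_pos this]
  unfold histProb contProb
  simp

lemma wG_zero (g : Protocol) (a : Fin 0 → Bool) : wG g 0 a = 0 := by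
  unfold wG
  apply Finset.sum_eq_zero
  intro b _
  have hj : jh a b = [] := by unfold jh; simp
  rw [hj, if_neg]
  rintro ⟨-, hnp⟩
  exact hnp (by simp [pending])

lemma wF_zero (g : Protocol) (a : Fin 0 → Bool) : wF g 0 a = 0 := by
  unfold wF
  apply Finset.sum_eq_zero
  intro b _
  have hj : jh a b = [] := by unfold jh; simp
  rw [hj, if_neg]
  rintro ⟨-, -, hl⟩
  simp [personal] at hl

/-! ### Child pointwise computations -/

lemma lastP1 (h : Hist 2) (x y : Bool) :
    (personal (h ++ [vpair x y]) 1).getLast? = some y := by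
  rw [personal_append, List.getLast?_append_cons]
  rfl

/-- T-weight after Alice transmits -/
lemma ptw_T_true (g : Protocol) (h : Hist 2) :
    ((if isT (h ++ [vpair true true]) then histProb (FS g) (h ++ [vpair true true]) else 0) +
     (if isT (h ++ [vpair true false]) then histProb (FS g) (h ++ [vpair true false]) else 0)) =
      g (personal h 0) *
        ((2/3) * (if isT h then histProb (FS g) h else 0) +
          (if isF h then histProb (FS g) h else 0)) := by
  have l1 := lastP1 h true true
  have l2 := lastP1 h true false
  by_cases h0 : pending h 0 <;> by_cases h1 : pending h 1 <;>
    by_cases hl : (personal h 1).getLast? = some false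
  all_goals
    simp only [isT, isF, pending_append, alone_zero, alone_one, vpair_zero, vpair_one,
      l1, l2, histProb_append, stepProb_two, h0, h1, hl, if_true, if_false,
      Bool.true_eq_false, Bool.false_eq_true, and_true, and_false, true_and, false_and,
      not_false_eq_true, not_true_eq_false, Option.some.injEq, ne_eq]
  all_goals
    first
      | (rw [fTwo_of_false hl]; ring)
      | (rw [fTwo_of_ne hl]; ring)
      | ring
      | norm_num

lemma ptw_G_true (g : Protocol) (h : Hist 2) :
    ((if isG (h ++ [vpair true true]) then histProb (FS g) (h ++ [vpair true true]) else 0) +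
     (if isG (h ++ [vpair true false]) then histProb (FS g) (h ++ [vpair true false]) else 0)) =
      (0 : ℝ) := by
  have l1 := lastP1 h true true
  have l2 := lastP1 h true false
  by_cases h0 : pending h 0 <;> by_cases h1 : pending h 1 <;>
    by_cases hl : (personal h 1).getLast? = some false
  all_goals
    simp only [isG, isT, isF, pending_append, alone_zero, alone_one, vpair_zero, vpair_one,
      l1, l2, histProb_append, stepProb_two, h0, h1, hl, if_true, if_false,
      Bool.true_eq_false, Bool.false_eq_true, and_true, and_false, true_and, false_and,
      not_false_eq_true, not_true_eq_false, Option.some.injEq, ne_eq]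
  all_goals
    first
      | (rw [fTwo_of_false hl]; ring)
      | (rw [fTwo_of_ne hl]; ring)
      | ring
      | norm_num

lemma ptw_F_true (g : Protocol) (h : Hist 2) :
    ((if isF (h ++ [vpair true true]) then histProb (FS g) (h ++ [vpair true true]) else 0) +
     (if isF (h ++ [vpair true false]) then histProb (FS g) (h ++ [vpair true false]) else 0)) =
      (0 : ℝ) := by
  have l1 := lastP1 h true true
  have l2 := lastP1 h true false
  by_cases h0 : pending h 0 <;> by_cases h1 : pending h 1 <;>
    by_cases hl : (personal h 1).getLast? = some false
  all_goals
    simp only [isG, isT, isF, pending_append, alone_zero, alone_one, vpair_zero, vpair_one,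
      l1, l2, histProb_append, stepProb_two, h0, h1, hl, if_true, if_false,
      Bool.true_eq_false, Bool.false_eq_true, and_true, and_false, true_and, false_and,
      not_false_eq_true, not_true_eq_false, Option.some.injEq, ne_eq]
  all_goals
    first
      | (rw [fTwo_of_false hl]; ring)
      | (rw [fTwo_of_ne hl]; ring)
      | ring
      | norm_num

lemma ptw_T_false (g : Protocol) (h : Hist 2) :
    ((if isT (h ++ [vpair false true]) then histProb (FS g) (h ++ [vpair false true]) else 0) +
     (if isT (h ++ [vpair false false]) then histProb (FS g) (h ++ [vpair false false]) else 0)) =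
      (0 : ℝ) := by
  have l1 := lastP1 h false true
  have l2 := lastP1 h false false
  by_cases h0 : pending h 0 <;> by_cases h1 : pending h 1 <;>
    by_cases hl : (personal h 1).getLast? = some false
  all_goals
    simp only [isG, isT, isF, pending_append, alone_zero, alone_one, vpair_zero, vpair_one,
      l1, l2, histProb_append, stepProb_two, h0, h1, hl, if_true, if_false,
      Bool.true_eq_false, Bool.false_eq_true, and_true, and_false, true_and, false_and,
      not_false_eq_true, not_true_eq_false, Option.some.injEq, ne_eq]
  all_goals
    first
      | (rw [fTwo_of_false hl]; ring)
      | (rw [fTwo_of_ne hl]; ring)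
      | ring
      | norm_num

lemma ptw_G_false (g : Protocol) (h : Hist 2) :
    ((if isG (h ++ [vpair false true]) then histProb (FS g) (h ++ [vpair false true]) else 0) +
     (if isG (h ++ [vpair false false]) then histProb (FS g) (h ++ [vpair false false]) else 0)) =
      (1 - g (personal h 0)) *
        ((2/3) * (if isT h then histProb (FS g) h else 0) +
          (if isF h then histProb (FS g) h else 0) +
          (if isG h then histProb (FS g) h else 0)) := by
  have l1 := lastP1 h false true
  have l2 := lastP1 h false false
  by_cases h0 : pending h 0 <;> by_cases h1 : pending h 1 <;>
    by_cases hl : (personal h 1).getLast? = some false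
  all_goals
    simp only [isG, isT, isF, pending_append, alone_zero, alone_one, vpair_zero, vpair_one,
      l1, l2, histProb_append, stepProb_two, h0, h1, hl, if_true, if_false,
      Bool.true_eq_false, Bool.false_eq_true, and_true, and_false, true_and, false_and,
      not_false_eq_true, not_true_eq_false, Option.some.injEq, ne_eq]
  all_goals
    first
      | (rw [fTwo_of_false hl]; ring)
      | (rw [fTwo_of_ne hl]; ring)
      | ring
      | norm_num

lemma ptw_F_false (g : Protocol) (h : Hist 2) :
    ((if isF (h ++ [vpair false true]) then histProb (FS g) (h ++ [vpair false true]) else 0) +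
     (if isF (h ++ [vpair false false]) then histProb (FS g) (h ++ [vpair false false]) else 0)) =
      (1 - g (personal h 0)) *
        ((1/3) * (if isT h then histProb (FS g) h else 0)) := by
  have l1 := lastP1 h false true
  have l2 := lastP1 h false false
  by_cases h0 : pending h 0 <;> by_cases h1 : pending h 1 <;>
    by_cases hl : (personal h 1).getLast? = some false
  all_goals
    simp only [isG, isT, isF, pending_append, alone_zero, alone_one, vpair_zero, vpair_one,
      l1, l2, histProb_append, stepProb_two, h0, h1, hl, if_true, if_false,
      Bool.true_eq_false, Bool.false_eq_true, and_true, and_false, true_and, false_and,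
      not_false_eq_true, not_true_eq_false, Option.some.injEq, ne_eq]
  all_goals
    first
      | (rw [fTwo_of_false hl]; ring)
      | (rw [fTwo_of_ne hl]; ring)
      | ring
      | norm_num

/-! ### Aggregated child-weight recursions -/

lemma wT_snoc_true (g : Protocol) {s : ℕ} (a : Fin s → Bool) :
    wT g (s + 1) (Fin.snoc a true) =
      g (List.ofFn a) * ((2/3) * wT g s a + wF g s a) := by
  unfold wT wF
  rw [sum_snoc]
  have key : ∀ b : Fin s → Bool,
      ((if isT (jh (Fin.snoc a true) (Fin.snoc b true)) then
          histProb (FS g) (jh (Fin.snoc a true) (Fin.snoc b true)) else 0) +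
       (if isT (jh (Fin.snoc a true) (Fin.snoc b false)) then
          histProb (FS g) (jh (Fin.snoc a true) (Fin.snoc b false)) else 0)) =
        g (List.ofFn a) *
          ((2/3) * (if isT (jh a b) then histProb (FS g) (jh a b) else 0) +
            (if isF (jh a b) then histProb (FS g) (jh a b) else 0)) := by
    intro b
    rw [jh_snoc, jh_snoc, ptw_T_true, personal_jh_zero]
  rw [Finset.sum_congr rfl fun b _ => key b, ← Finset.mul_sum]
  congr 1
  rw [Finset.sum_add_distrib, ← Finset.mul_sum]

lemma wG_snoc_true (g : Protocol) {s : ℕ} (a : Fin s → Bool) :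
    wG g (s + 1) (Fin.snoc a true) = 0 := by
  unfold wG
  rw [sum_snoc]
  apply Finset.sum_eq_zero
  intro b _
  rw [jh_snoc, jh_snoc, ptw_G_true]

lemma wF_snoc_true (g : Protocol) {s : ℕ} (a : Fin s → Bool) :
    wF g (s + 1) (Fin.snoc a true) = 0 := by
  unfold wF
  rw [sum_snoc]
  apply Finset.sum_eq_zero
  intro b _
  rw [jh_snoc, jh_snoc, ptw_F_true]

lemma wT_snoc_false (g : Protocol) {s : ℕ} (a : Fin s → Bool) :
    wT g (s + 1) (Fin.snoc a false) = 0 := by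
  unfold wT
  rw [sum_snoc]
  apply Finset.sum_eq_zero
  intro b _
  rw [jh_snoc, jh_snoc, ptw_T_false]

lemma wG_snoc_false (g : Protocol) {s : ℕ} (a : Fin s → Bool) :
    wG g (s + 1) (Fin.snoc a false) =
      (1 - g (List.ofFn a)) * ((2/3) * wT g s a + wF g s a + wG g s a) := by
  unfold wG wT wF
  rw [sum_snoc]
  have key : ∀ b : Fin s → Bool,
      ((if isG (jh (Fin.snoc a false) (Fin.snoc b true)) then
          histProb (FS g) (jh (Fin.snoc a false) (Fin.snoc b true)) else 0) +
       (if isG (jh (Fin.snoc a false) (Fin.snoc b false)) then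
          histProb (FS g) (jh (Fin.snoc a false) (Fin.snoc b false)) else 0)) =
        (1 - g (List.ofFn a)) *
          ((2/3) * (if isT (jh a b) then histProb (FS g) (jh a b) else 0) +
            (if isF (jh a b) then histProb (FS g) (jh a b) else 0) +
            (if isG (jh a b) then histProb (FS g) (jh a b) else 0)) := by
    intro b
    rw [jh_snoc, jh_snoc, ptw_G_false, personal_jh_zero]
  rw [Finset.sum_congr rfl fun b _ => key b, ← Finset.mul_sum]
  congr 1
  rw [Finset.sum_add_distrib, Finset.sum_add_distrib, ← Finset.mul_sum]

lemma wF_snoc_false (g : Protocol) {s : ℕ} (a : Fin s → Bool) :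
    wF g (s + 1) (Fin.snoc a false) = (1 - g (List.ofFn a)) * ((1/3) * wT g s a) := by
  unfold wF wT
  rw [sum_snoc]
  have key : ∀ b : Fin s → Bool,
      ((if isF (jh (Fin.snoc a false) (Fin.snoc b true)) then
          histProb (FS g) (jh (Fin.snoc a false) (Fin.snoc b true)) else 0) +
       (if isF (jh (Fin.snoc a false) (Fin.snoc b false)) then
          histProb (FS g) (jh (Fin.snoc a false) (Fin.snoc b false)) else 0)) =
        (1 - g (List.ofFn a)) *
          ((1/3) * (if isT (jh a b) then histProb (FS g) (jh a b) else 0)) := by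
    intro b
    rw [jh_snoc, jh_snoc, ptw_F_false, personal_jh_zero]
  rw [Finset.sum_congr rfl fun b _ => key b, ← Finset.mul_sum]
  congr 1
  rw [← Finset.mul_sum]

/-! ### The potential function -/

noncomputable def Phi (g : Protocol) (s : ℕ) (a : Fin s → Bool) : ℝ :=
  3 * wT g s a + min (wG g s a + 4 * wF g s a) (2 * wG g s a + 2 * wF g s a)

lemma Phi_le {g : Protocol} (hg : ValidProtocol g) (s : ℕ) (a : Fin s → Bool) :
    Phi g s a ≤ 4 * (wG g s a + wT g s a + wF g s a) := by
  have h1 := wG_nonneg hg s a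
  have h2 := wT_nonneg hg s a
  have h3 := wF_nonneg hg s a
  have : min (wG g s a + 4 * wF g s a) (2 * wG g s a + 2 * wF g s a) ≤
      2 * wG g s a + 2 * wF g s a := min_le_right _ _
  unfold Phi
  linarith

lemma Phi_nonneg {g : Protocol} (hg : ValidProtocol g) (s : ℕ) (a : Fin s → Bool) :
    0 ≤ Phi g s a := by
  have h1 := wG_nonneg hg s a
  have h2 := wT_nonneg hg s a
  have h3 := wF_nonneg hg s a
  have : (0:ℝ) ≤ min (wG g s a + 4 * wF g s a) (2 * wG g s a + 2 * wF g s a) :=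
    le_min (by linarith) (by linarith)
  unfold Phi
  linarith

/-- The key one-step supermartingale inequality. -/
lemma Phi_step {g : Protocol} (hg : ValidProtocol g) (s : ℕ) (a : Fin s → Bool) :
    Phi g s a ≤ (wG g s a + wT g s a + wF g s a) +
      (Phi g (s + 1) (Fin.snoc a true) + Phi g (s + 1) (Fin.snoc a false)) := by
  have hG := wG_nonneg hg s a
  have hT := wT_nonneg hg s a
  have hF := wF_nonneg hg s a
  have hp0 := (hg (List.ofFn a)).1
  have hp1 := (hg (List.ofFn a)).2
  set p := g (List.ofFn a) with hp
  set G := wG g s a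
  set T := wT g s a
  set F := wF g s a
  have e1 : Phi g (s + 1) (Fin.snoc a true) = p * ((2/3) * T + F) * 3 := by
    unfold Phi
    rw [wT_snoc_true, wG_snoc_true, wF_snoc_true]
    norm_num
    ring
  have e2 : Phi g (s + 1) (Fin.snoc a false) =
      min ((1 - p) * ((2/3) * T + F + G) + 4 * ((1 - p) * ((1/3) * T)))
        (2 * ((1 - p) * ((2/3) * T + F + G)) + 2 * ((1 - p) * ((1/3) * T))) := by
    unfold Phi
    rw [wT_snoc_false, wG_snoc_false, wF_snoc_false]
    ring_nf
    rfl
  rw [e1, e2]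
  have hmin1 : ((1 - p) * ((2/3) * T + F + G) + 4 * ((1 - p) * ((1/3) * T))) =
      (1 - p) * (G + F + 2 * T) := by ring
  have hmin2 : (2 * ((1 - p) * ((2/3) * T + F + G)) + 2 * ((1 - p) * ((1/3) * T))) =
      (1 - p) * (2 * G + 2 * F + 2 * T) := by ring
  rw [hmin1, hmin2]
  have h1p : (0:ℝ) ≤ 1 - p := by linarith
  have hminr : (1 - p) * (G + F + 2 * T) ≤ (1 - p) * (2 * G + 2 * F + 2 * T) := by
    apply mul_le_mul_of_nonneg_left _ h1p
    linarith
  rw [min_eq_left hminr]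
  unfold Phi
  -- LHS min ≤ convex combination p*(G+4F) + (1-p)*(2G+2F)
  have key : min (G + 4 * F) (2 * G + 2 * F) ≤ p * (G + 4 * F) + (1 - p) * (2 * G + 2 * F) := by
    rcases min_cases (G + 4 * F) (2 * G + 2 * F) with ⟨hm, _⟩ | ⟨hm, hle⟩
    · rw [hm]
      nlinarith
    · rw [hm]
      nlinarith
  nlinarith [key]

/-! ### Main induction -/

lemma main_ind {g : Protocol} (hg : ValidProtocol g) (N : ℕ) :
    (3:ℝ) ≤ (∑ s ∈ Finset.range N, condPendProb (FS g) [] 0 s) +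
      ∑ a : Fin N → Bool, Phi g N a := by
  induction N with
  | zero =>
    have hPhi : ∀ a : Fin 0 → Bool, Phi g 0 a = 3 := by
      intro a
      unfold Phi
      rw [wT_zero, wG_zero, wF_zero]
      norm_num
    rw [Finset.sum_congr rfl fun a _ => hPhi a]
    simp
  | succ N ih =>
    have step : ∑ a : Fin N → Bool, Phi g N a ≤
        condPendProb (FS g) [] 0 N + ∑ a : Fin (N + 1) → Bool, Phi g (N + 1) a := by
      calc ∑ a : Fin N → Bool, Phi g N a
          ≤ ∑ a : Fin N → Bool, ((wG g N a + wT g N a + wF g N a) +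
              (Phi g (N + 1) (Fin.snoc a true) + Phi g (N + 1) (Fin.snoc a false))) :=
            Finset.sum_le_sum fun a _ => Phi_step hg N a
        _ = (∑ a : Fin N → Bool, (wG g N a + wT g N a + wF g N a)) +
              ∑ a : Fin N → Bool,
                (Phi g (N + 1) (Fin.snoc a true) + Phi g (N + 1) (Fin.snoc a false)) :=
            Finset.sum_add_distrib
        _ = condPendProb (FS g) [] 0 N + ∑ a : Fin (N + 1) → Bool, Phi g (N + 1) a := by
            rw [← condPend_eq, ← sum_snoc]
    rw [Finset.sum_range_succ]
    linarith

lemma main_real {g : Protocol} (hg : ValidProtocol g) (N : ℕ) :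
    (3:ℝ) ≤ (∑ s ∈ Finset.range N, condPendProb (FS g) [] 0 s) +
      4 * condPendProb (FS g) [] 0 N := by
  have h1 := main_ind hg N
  have h2 : ∑ a : Fin N → Bool, Phi g N a ≤ 4 * condPendProb (FS g) [] 0 N := by
    calc ∑ a : Fin N → Bool, Phi g N a
        ≤ ∑ a : Fin N → Bool, 4 * (wG g N a + wT g N a + wF g N a) :=
          Finset.sum_le_sum fun a _ => Phi_le hg N a
      _ = 4 * ∑ a : Fin N → Bool, (wG g N a + wT g N a + wF g N a) := by
          rw [Finset.mul_sum]
      _ = 4 * condPendProb (FS g) [] 0 N := by rw [← condPend_eq]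
  linarith

lemma partial_nonneg {g : Protocol} (hg : ValidProtocol g) (N : ℕ) :
    0 ≤ ∑ s ∈ Finset.range N, condPendProb (FS g) [] 0 s :=
  Finset.sum_nonneg fun s _ => condPendProb_nonneg hg [] 0 s

lemma condLatency_eq (g : Protocol) :
    condLatency (FS g) [] 0 = ∑' s : ℕ, ENNReal.ofReal (condPendProb (FS g) [] 0 s) := by
  unfold condLatency
  apply tsum_congr
  intro s
  cases s with
  | zero =>
    have hP : condPendProb (FS g) [] 0 0 = 1 := by
      unfold condPendProb
      rw [Fintype.sum_eq_single (fun (_ : Fin 0) (_ : Fin 2) => false)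
        (by intro e he; exact absurd (Subsingleton.elim _ _) he)]
      have h1 : List.ofFn (fun (_ : Fin 0) (_ : Fin 2) => false) = ([] : Hist 2) := by simp
      rw [h1]
      have h2 : pending (([] : Hist 2) ++ []) (0 : Fin 2) := by simp [pending]
      rw [if_pos h2]
      unfold contProb
      simp
    rw [hP]
    have h3 : pending (List.take 0 ([] : Hist 2)) (0 : Fin 2) := by simp [pending]
    rw [if_pos (by simp : (0:ℕ) ≤ ([] : Hist 2).length), if_pos h3, ENNReal.ofReal_one]
  | succ n =>
    rw [if_neg (by simp)]
    simp

lemma ofReal_partial {g : Protocol} (hg : ValidProtocol g) (N : ℕ) :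
    ENNReal.ofReal (∑ s ∈ Finset.range N, condPendProb (FS g) [] 0 s) =
      ∑ s ∈ Finset.range N, ENNReal.ofReal (condPendProb (FS g) [] 0 s) :=
  ENNReal.ofReal_sum_of_nonneg fun s _ => condPendProb_nonneg hg [] 0 s

theorem main_bound {g : Protocol} (hg : ValidProtocol g) :
    (3 : ℝ≥0∞) ≤ condLatency (FS g) [] 0 := by
  rw [condLatency_eq]
  set S := ∑' s : ℕ, ENNReal.ofReal (condPendProb (FS g) [] 0 s) with hS
  by_cases htop : S = ⊤
  · rw [htop]; exact le_top
  · have hten : Filter.Tendsto (fun s => ENNReal.ofReal (condPendProb (FS g) [] 0 s))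
        Filter.atTop (nhds 0) := ENNReal.tendsto_atTop_zero_of_tsum_ne_top htop
    apply ENNReal.le_of_forall_pos_le_add
    intro ε hε _
    have hε4 : (0 : ℝ≥0∞) < (ε : ℝ≥0∞) / 4 := by
      apply ENNReal.div_pos
      · exact_mod_cast hε.ne'
      · norm_num
    obtain ⟨N, hN⟩ := (ENNReal.tendsto_atTop_zero.mp hten) ((ε : ℝ≥0∞) / 4) hε4
    have hNN := hN N (le_refl N)
    have hreal := main_real hg N
    have h3 : (3 : ℝ≥0∞) = ENNReal.ofReal 3 := by norm_num
    calc (3 : ℝ≥0∞) = ENNReal.ofReal 3 := h3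
      _ ≤ ENNReal.ofReal ((∑ s ∈ Finset.range N, condPendProb (FS g) [] 0 s) +
            4 * condPendProb (FS g) [] 0 N) := ENNReal.ofReal_le_ofReal hreal
      _ ≤ ENNReal.ofReal (∑ s ∈ Finset.range N, condPendProb (FS g) [] 0 s) +
            ENNReal.ofReal (4 * condPendProb (FS g) [] 0 N) := ENNReal.ofReal_add_le
      _ = (∑ s ∈ Finset.range N, ENNReal.ofReal (condPendProb (FS g) [] 0 s)) +
            ENNReal.ofReal 4 * ENNReal.ofReal (condPendProb (FS g) [] 0 N) := by
            rw [ofReal_partial hg, ENNReal.ofReal_mul (by norm_num : (0:ℝ) ≤ 4)]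
      _ ≤ S + 4 * ((ε : ℝ≥0∞) / 4) := by
            apply add_le_add
            · exact ENNReal.sum_le_tsum _
            · rw [show ENNReal.ofReal 4 = (4 : ℝ≥0∞) by norm_num]
              exact mul_le_mul_right hNN 4
      _ = S + ε := by
            congr 1
            rw [ENNReal.mul_div_cancel (by norm_num) (by norm_num)]

end Contention


namespace Contention

/-- For `n = 2` players, if Bob (player `1`) uses protocol `fTwo`, then for
every acknowledgment-based protocol `g` of Alice (player `0`), Alice's unconditional
expected latency under the profile `(g, fTwo)` is at least `3`. -/
theorem two_player_best_response_lower_bound :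
    ∀ g : Protocol, ValidProtocol g →
      (3 : ℝ≥0∞) ≤ condLatency (fun i : Fin 2 => if i = 0 then g else fTwo) [] 0 := by
  intro g hg
  exact main_bound hg

end Contention
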